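/- Hodge decomposition: if B₁ : C₁ → C₀ and B₂ : C₂ → C₁ are linear maps between finite-dimensional real inner product spaces satisfying B₁ ∘ B₂ = 0, and Δ₁ = B₁^T B₁ + B₂ B₂^T, then C₁ = im(B₂) ⊕ im(B₁^T) ⊕ ker(Δ₁) as an orthogonal direct sum. -/

import Mathlib

open scoped RealInnerProductSpace

/-- Hodge decomposition: if B₁B₂ = 0 and Δ₁ = B₁ᵀB₁ + B₂B₂ᵀ, then
`C₁ = im(B₂) ⊕ im(B₁ᵀ) ⊕ ker(Δ₁)` as an orthogonal direct sum. -/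
theorem hodge_decomposition
    {C₀ C₁ C₂ : Type*}
    [NormedAddCommGroup C₀] [InnerProductSpace ℝ C₀] [FiniteDimensional ℝ C₀]
    [NormedAddCommGroup C₁] [InnerProductSpace ℝ C₁] [FiniteDimensional ℝ C₁]
    [NormedAddCommGroup C₂] [InnerProductSpace ℝ C₂] [FiniteDimensional ℝ C₂]
    (B₁ : C₁ →ₗ[ℝ] C₀) (B₂ : C₂ →ₗ[ℝ] C₁)
    (h : B₁.comp B₂ = 0) :
    let Δ₁ : C₁ →ₗ[ℝ] C₁ :=
      (LinearMap.adjoint B₁).comp B₁ + B₂.comp (LinearMap.adjoint B₂)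
    (∀ x ∈ LinearMap.range B₂, ∀ y ∈ LinearMap.range (LinearMap.adjoint B₁),
      ⟪x, y⟫ = 0) ∧
    (∀ x ∈ LinearMap.range B₂, ∀ z ∈ LinearMap.ker Δ₁, ⟪x, z⟫ = 0) ∧
    (∀ y ∈ LinearMap.range (LinearMap.adjoint B₁), ∀ z ∈ LinearMap.ker Δ₁,
      ⟪y, z⟫ = 0) ∧
    LinearMap.range B₂ ⊔ LinearMap.range (LinearMap.adjoint B₁) ⊔
      LinearMap.ker Δ₁ = ⊤ := by
  intro Δ₁
  -- key: z ∈ ker Δ₁ → B₁ z = 0 ∧ (adjoint B₂) z = 0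
  have key : ∀ z ∈ LinearMap.ker Δ₁, B₁ z = 0 ∧ LinearMap.adjoint B₂ z = 0 := by
    intro z hz
    have hz' : Δ₁ z = 0 := hz
    have h0 : (0 : ℝ) = ⟪Δ₁ z, z⟫ := by rw [hz']; simp
    have hexp : ⟪Δ₁ z, z⟫ = ‖B₁ z‖ ^ 2 + ‖LinearMap.adjoint B₂ z‖ ^ 2 := by
      simp only [Δ₁, LinearMap.add_apply, LinearMap.comp_apply, inner_add_left,
        LinearMap.adjoint_inner_left]
      rw [real_inner_self_eq_norm_sq, ← LinearMap.adjoint_inner_right B₂,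
        real_inner_self_eq_norm_sq]
    have h1 : ‖B₁ z‖ ^ 2 + ‖LinearMap.adjoint B₂ z‖ ^ 2 = 0 := by
      rw [← hexp, ← h0]
    have h2 : ‖B₁ z‖ ^ 2 = 0 ∧ ‖LinearMap.adjoint B₂ z‖ ^ 2 = 0 := by
      constructor <;> nlinarith [sq_nonneg ‖B₁ z‖, sq_nonneg ‖LinearMap.adjoint B₂ z‖]
    constructor
    · have := h2.1
      simpa [pow_eq_zero_iff, norm_eq_zero] using this
    · have := h2.2
      simpa [pow_eq_zero_iff, norm_eq_zero] using this
  refine ⟨?_, ?_, ?_, ?_⟩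
  · rintro x ⟨a, rfl⟩ y ⟨b, rfl⟩
    have : B₁ (B₂ a) = 0 := by
      have := congrArg (fun f => f a) h
      simpa using this
    rw [LinearMap.adjoint_inner_right]
    simp [this]
  · rintro x ⟨a, rfl⟩ z hz
    rw [real_inner_comm, ← LinearMap.adjoint_inner_left, (key z hz).2]
    simp
  · rintro y ⟨b, rfl⟩ z hz
    rw [real_inner_comm, LinearMap.adjoint_inner_right, (key z hz).1]
    simp
  · have hle : (LinearMap.range B₂ ⊔ LinearMap.range (LinearMap.adjoint B₁))ᗮ ≤
        LinearMap.ker Δ₁ := by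
      intro z hz
      rw [Submodule.mem_orthogonal] at hz
      have hB2 : LinearMap.adjoint B₂ z = 0 := by
        have : ∀ a, ⟪a, LinearMap.adjoint B₂ z⟫ = 0 := by
          intro a
          rw [LinearMap.adjoint_inner_right]
          exact hz _ (Submodule.mem_sup_left ⟨a, rfl⟩)
        have := this (LinearMap.adjoint B₂ z)
        rwa [inner_self_eq_zero] at this
      have hB1 : B₁ z = 0 := by
        have : ∀ b, ⟪b, B₁ z⟫ = 0 := by
          intro b
          rw [← LinearMap.adjoint_inner_left]
          exact hz _ (Submodule.mem_sup_right ⟨b, rfl⟩)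
        have := this (B₁ z)
        rwa [inner_self_eq_zero] at this
      show Δ₁ z = 0
      simp [Δ₁, hB1, hB2]
    have hsup : (LinearMap.range B₂ ⊔ LinearMap.range (LinearMap.adjoint B₁)) ⊔
        (LinearMap.range B₂ ⊔ LinearMap.range (LinearMap.adjoint B₁))ᗮ = ⊤ :=
      Submodule.sup_orthogonal_of_hasOrthogonalProjection
    refine top_le_iff.mp ?_
    rw [← hsup]
    exact sup_le_sup_left hle _
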